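/- Let G be a po-group and let x¹ = (0,⟨x¹_i⟩), x² = (0,⟨x²_i⟩), y¹ = (0,⟨y¹_i⟩), y² = (0,⟨y²_i⟩) be positive elements of the right wreath product ℤ ⃗wr G such that x¹_i = x²_i = y¹_i = y²_i = e for all i ≠ 0 and x¹·x² = y¹·y². If (0,⟨c^{11}_i⟩), (0,⟨c^{12}_i⟩), (0,⟨c^{21}_i⟩), (0,⟨c^{22}_i⟩) are positive elements of ℤ ⃗wr G with x¹ = c¹¹·c¹², x² = c²¹·c²², y¹ = c¹¹·c²¹, y² = c¹²·c²², then c^{jk}_i = e for every index i > 0 and all j,k ∈ {1,2}. -/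

import Mathlib

/-! Riesz decomposition properties relative to explicit multiplication `mul`,
unit `one`, and order relation `le`, together with the lexicographic product
order and (unrestricted/restricted, right/left) wreath products of po-groups. -/

/-- The Riesz decomposition property (RDP). -/
def RDPWith {M : Type*} (mul : M → M → M) (one : M) (le : M → M → Prop) : Prop :=
  ∀ a₁ a₂ b₁ b₂ : M,
    le one a₁ → le one a₂ → le one b₁ → le one b₂ → mul a₁ a₂ = mul b₁ b₂ →
    ∃ c₁₁ c₁₂ c₂₁ c₂₂ : M,
      le one c₁₁ ∧ le one c₁₂ ∧ le one c₂₁ ∧ le one c₂₂ ∧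
      a₁ = mul c₁₁ c₁₂ ∧ a₂ = mul c₂₁ c₂₂ ∧ b₁ = mul c₁₁ c₂₁ ∧ b₂ = mul c₁₂ c₂₂

/-- The Riesz decomposition property RDP₁ (commutativity below the
cross-diagonal entries `c₁₂`, `c₂₁`). -/
def RDP1With {M : Type*} (mul : M → M → M) (one : M) (le : M → M → Prop) : Prop :=
  ∀ a₁ a₂ b₁ b₂ : M,
    le one a₁ → le one a₂ → le one b₁ → le one b₂ → mul a₁ a₂ = mul b₁ b₂ →
    ∃ c₁₁ c₁₂ c₂₁ c₂₂ : M,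
      le one c₁₁ ∧ le one c₁₂ ∧ le one c₂₁ ∧ le one c₂₂ ∧
      a₁ = mul c₁₁ c₁₂ ∧ a₂ = mul c₂₁ c₂₂ ∧ b₁ = mul c₁₁ c₂₁ ∧ b₂ = mul c₁₂ c₂₂ ∧
      (∀ x y : M, le one x → le x c₁₂ → le one y → le y c₂₁ → mul x y = mul y x)

/-- The Riesz decomposition property RDP₂ (the infimum of `c₁₂` and `c₂₁`
exists and equals `one`; the last clause, together with `le one c₁₂` and
`le one c₂₁`, says exactly that `one` is the greatest lower bound). -/
def RDP2With {M : Type*} (mul : M → M → M) (one : M) (le : M → M → Prop) : Prop :=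
  ∀ a₁ a₂ b₁ b₂ : M,
    le one a₁ → le one a₂ → le one b₁ → le one b₂ → mul a₁ a₂ = mul b₁ b₂ →
    ∃ c₁₁ c₁₂ c₂₁ c₂₂ : M,
      le one c₁₁ ∧ le one c₁₂ ∧ le one c₂₁ ∧ le one c₂₂ ∧
      a₁ = mul c₁₁ c₁₂ ∧ a₂ = mul c₂₁ c₂₂ ∧ b₁ = mul c₁₁ c₂₁ ∧ b₂ = mul c₁₂ c₂₂ ∧
      (∀ z : M, le z c₁₂ → le z c₂₁ → le z one)

/-- RDP for the sub-po-group carried by the subset `S`. -/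
def RDPWithOn {M : Type*} (S : Set M) (mul : M → M → M) (one : M)
    (le : M → M → Prop) : Prop :=
  ∀ a₁ a₂ b₁ b₂ : M, a₁ ∈ S → a₂ ∈ S → b₁ ∈ S → b₂ ∈ S →
    le one a₁ → le one a₂ → le one b₁ → le one b₂ → mul a₁ a₂ = mul b₁ b₂ →
    ∃ c₁₁ c₁₂ c₂₁ c₂₂ : M, c₁₁ ∈ S ∧ c₁₂ ∈ S ∧ c₂₁ ∈ S ∧ c₂₂ ∈ S ∧
      le one c₁₁ ∧ le one c₁₂ ∧ le one c₂₁ ∧ le one c₂₂ ∧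
      a₁ = mul c₁₁ c₁₂ ∧ a₂ = mul c₂₁ c₂₂ ∧ b₁ = mul c₁₁ c₂₁ ∧ b₂ = mul c₁₂ c₂₂

/-- RDP₁ for the sub-po-group carried by the subset `S`. -/
def RDP1WithOn {M : Type*} (S : Set M) (mul : M → M → M) (one : M)
    (le : M → M → Prop) : Prop :=
  ∀ a₁ a₂ b₁ b₂ : M, a₁ ∈ S → a₂ ∈ S → b₁ ∈ S → b₂ ∈ S →
    le one a₁ → le one a₂ → le one b₁ → le one b₂ → mul a₁ a₂ = mul b₁ b₂ →
    ∃ c₁₁ c₁₂ c₂₁ c₂₂ : M, c₁₁ ∈ S ∧ c₁₂ ∈ S ∧ c₂₁ ∈ S ∧ c₂₂ ∈ S ∧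
      le one c₁₁ ∧ le one c₁₂ ∧ le one c₂₁ ∧ le one c₂₂ ∧
      a₁ = mul c₁₁ c₁₂ ∧ a₂ = mul c₂₁ c₂₂ ∧ b₁ = mul c₁₁ c₂₁ ∧ b₂ = mul c₁₂ c₂₂ ∧
      (∀ x y : M, x ∈ S → y ∈ S →
        le one x → le x c₁₂ → le one y → le y c₂₁ → mul x y = mul y x)

/-- RDP₂ for the sub-po-group carried by the subset `S`. -/
def RDP2WithOn {M : Type*} (S : Set M) (mul : M → M → M) (one : M)
    (le : M → M → Prop) : Prop :=
  ∀ a₁ a₂ b₁ b₂ : M, a₁ ∈ S → a₂ ∈ S → b₁ ∈ S → b₂ ∈ S →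
    le one a₁ → le one a₂ → le one b₁ → le one b₂ → mul a₁ a₂ = mul b₁ b₂ →
    ∃ c₁₁ c₁₂ c₂₁ c₂₂ : M, c₁₁ ∈ S ∧ c₁₂ ∈ S ∧ c₂₁ ∈ S ∧ c₂₂ ∈ S ∧
      le one c₁₁ ∧ le one c₁₂ ∧ le one c₂₁ ∧ le one c₂₂ ∧
      a₁ = mul c₁₁ c₁₂ ∧ a₂ = mul c₂₁ c₂₂ ∧ b₁ = mul c₁₁ c₂₁ ∧ b₂ = mul c₁₂ c₂₂ ∧
      (∀ z : M, z ∈ S → le z c₁₂ → le z c₂₁ → le z one)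

/-- The Riesz interpolation property (RIP). -/
def RIPWith {M : Type*} (le : M → M → Prop) : Prop :=
  ∀ a₁ a₂ b₁ b₂ : M, le a₁ b₁ → le a₁ b₂ → le a₂ b₁ → le a₂ b₂ →
    ∃ c : M, le a₁ c ∧ le a₂ c ∧ le c b₁ ∧ le c b₂

/-- RIP for the subposet carried by the subset `S`. -/
def RIPWithOn {M : Type*} (S : Set M) (le : M → M → Prop) : Prop :=
  ∀ a₁ a₂ b₁ b₂ : M, a₁ ∈ S → a₂ ∈ S → b₁ ∈ S → b₂ ∈ S →
    le a₁ b₁ → le a₁ b₂ → le a₂ b₁ → le a₂ b₂ →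
    ∃ c ∈ S, le a₁ c ∧ le a₂ c ∧ le c b₁ ∧ le c b₂

/-- The lexicographic order on a product: `(g₁,h₁) ≤ (g₂,h₂)` iff `g₁ < g₂`,
or `g₁ = g₂` and `h₁ ≤ h₂`. -/
def lexLE {A B : Type*} [PartialOrder A] [LE B] (p q : A × B) : Prop :=
  p.1 < q.1 ∨ (p.1 = q.1 ∧ p.2 ≤ q.2)

/-- A poset is an antilattice if only comparable pairs of elements have a
join or a meet. -/
def IsAntilattice (G : Type*) [PartialOrder G] : Prop :=
  ∀ a b : G, ((∃ s, IsLUB {a, b} s) ∨ (∃ s, IsGLB {a, b} s)) → a ≤ b ∨ b ≤ a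

/-- Multiplication of the unrestricted Wreath product `A Wr G`:
`(n,⟨g_a⟩)·(m,⟨h_a⟩) = (n·m, ⟨g_a·h_{a·n}⟩)`. -/
def wrMul {A G : Type*} [Mul A] [Mul G] (p q : A × (A → G)) : A × (A → G) :=
  (p.1 * q.1, fun a => p.2 a * q.2 (a * p.1))

/-- The unit of the Wreath product `A Wr G`. -/
def wrOne (A G : Type*) [One A] [One G] : A × (A → G) :=
  (1, fun _ => 1)

/-- The order of the Wreath product `A Wr G`: `(n,⟨g_a⟩) ≤ (m,⟨h_a⟩)` iff
`n < m`, or `n = m` and `g_a ≤ h_a` for all `a`. -/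
def wrLE {A G : Type*} [PartialOrder A] [LE G] (p q : A × (A → G)) : Prop :=
  p.1 < q.1 ∨ (p.1 = q.1 ∧ ∀ a, p.2 a ≤ q.2 a)

/-- The carrier of the restricted Wreath product `A wr G`: elements whose
second component equals `1` at all but finitely many places. -/
def wrS (A G : Type*) [One G] : Set (A × (A → G)) :=
  {p | (Function.mulSupport p.2).Finite}

/-- Multiplication of the wreath products over `ℤ`:
`(n,⟨g_i⟩)·(m,⟨h_i⟩) = (n+m, ⟨g_i·h_{i+n}⟩)`. -/
def zwrMul {G : Type*} [Mul G] (p q : ℤ × (ℤ → G)) : ℤ × (ℤ → G) :=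
  (p.1 + q.1, fun i => p.2 i * q.2 (i + p.1))

/-- The unit of the wreath products over `ℤ`. -/
def zwrOne (G : Type*) [One G] : ℤ × (ℤ → G) :=
  (0, fun _ => 1)

/-- The inverse in the wreath products over `ℤ`. -/
def zwrInv {G : Type*} [Inv G] (p : ℤ × (ℤ → G)) : ℤ × (ℤ → G) :=
  (-p.1, fun i => (p.2 (i - p.1))⁻¹)

/-- The carrier of the (restricted) wreath products over `ℤ`: elements with
`g_i = 1` for all but finitely many `i`. -/
def zwrS (G : Type*) [One G] : Set (ℤ × (ℤ → G)) :=
  {p | (Function.mulSupport p.2).Finite}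

/-- Strict positivity in the right wreath product `ℤ →wr G`: either `n > 0`,
or `n = 0`, some `g_i ≠ 1`, and `g_j > 1` where `j` is the greatest index `i`
with `g_i ≠ 1`. -/
def rPos {G : Type*} [One G] [LT G] (p : ℤ × (ℤ → G)) : Prop :=
  0 < p.1 ∨ (p.1 = 0 ∧ ∃ j : ℤ, 1 < p.2 j ∧ ∀ i : ℤ, j < i → p.2 i = 1)

/-- Strict positivity in the left wreath product `ℤ ←wr G`: either `n > 0`,
or `n = 0`, some `g_i ≠ 1`, and `g_j > 1` where `j` is the least index `i`
with `g_i ≠ 1`. -/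
def lPos {G : Type*} [One G] [LT G] (p : ℤ × (ℤ → G)) : Prop :=
  0 < p.1 ∨ (p.1 = 0 ∧ ∃ j : ℤ, 1 < p.2 j ∧ ∀ i : ℤ, i < j → p.2 i = 1)

/-- The order of the right wreath product `ℤ →wr G`. -/
def rLE {G : Type*} [Group G] [LT G] (p q : ℤ × (ℤ → G)) : Prop :=
  p = q ∨ rPos (zwrMul (zwrInv p) q)

/-- The order of the left wreath product `ℤ ←wr G`. -/
def lLE {G : Type*} [Group G] [LT G] (p q : ℤ × (ℤ → G)) : Prop :=
  p = q ∨ lPos (zwrMul (zwrInv p) q)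

lemma rle_pos_cases {G : Type*} [Group G] [PartialOrder G] (a : ℤ → G)
    (h : rLE (zwrOne G) ((0 : ℤ), a)) :
    (∀ i, a i = 1) ∨ ∃ j : ℤ, 1 < a j ∧ ∀ i, j < i → a i = 1 := by
  rcases h with h | h
  · left
    intro i
    exact (congrFun (congrArg Prod.snd h) i).symm
  · right
    simp only [rPos, zwrMul, zwrInv, zwrOne] at h
    rcases h with h | ⟨-, j, hj, hj'⟩
    · simp at h
    · refine ⟨j, by simpa using hj, fun i hi => by simpa using hj' i hi⟩

lemma key_vanish {G : Type*} [Group G] [PartialOrder G]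
    [CovariantClass G G (· * ·) (· ≤ ·)]
    (a b : ℤ → G) (hfa : (Function.mulSupport a).Finite)
    (hab : ∀ i : ℤ, 0 < i → a i * b i = 1)
    (ha : (∀ i, a i = 1) ∨ ∃ j : ℤ, 1 < a j ∧ ∀ i, j < i → a i = 1)
    (hb : (∀ i, b i = 1) ∨ ∃ j : ℤ, 1 < b j ∧ ∀ i, j < i → b i = 1) :
    ∀ i : ℤ, 0 < i → a i = 1 ∧ b i = 1 := by
  have key : ∀ i : ℤ, 0 < i → a i = 1 := by
    rcases ha with ha | ⟨ja, hja, hja'⟩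
    · intro i _; exact ha i
    rcases hb with hb | ⟨jb, hjb, hjb'⟩
    · intro i hi
      have := hab i hi
      rw [hb i, mul_one] at this
      exact this
    -- both nontrivial; suppose a is nontrivial at some positive index
    by_contra hcon
    push_neg at hcon
    set T : Set ℤ := {i | 0 < i ∧ a i ≠ 1} with hT
    have hTfin : T.Finite := hfa.subset (fun i hi => hi.2)
    have hTne : T.Nonempty := by
      obtain ⟨i, hi, hine⟩ := hcon
      exact ⟨i, hi, hine⟩
    obtain ⟨m, hmT, hmax⟩ := hTfin.exists_maximalFor id T hTne
    have hmax' : ∀ i ∈ T, i ≤ m := fun i hi => by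
      by_contra hlt
      push_neg at hlt
      exact absurd (hmax hi hlt.le) (not_le.mpr hlt)
    have hm0 : 0 < m := hmT.1
    have hmne : a m ≠ 1 := hmT.2
    -- m ≤ ja
    have hmja : m ≤ ja := by
      by_contra hlt
      push_neg at hlt
      exact hmne (hja' m hlt)
    have hjaT : ja ∈ T := ⟨lt_of_lt_of_le hm0 hmja, ne_of_gt hja⟩
    have hjam : ja = m := le_antisymm (hmax' ja hjaT) hmja
    have ham : 1 < a m := hjam ▸ hja
    -- b m ≠ 1
    have habm := hab m hm0
    have hbmne : b m ≠ 1 := by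
      intro h
      rw [h, mul_one] at habm
      exact hmne habm
    have hmjb : m ≤ jb := by
      by_contra hlt
      push_neg at hlt
      exact hbmne (hjb' m hlt)
    have hjb0 : 0 < jb := lt_of_lt_of_le hm0 hmjb
    have hajb : a jb ≠ 1 := by
      intro h
      have := hab jb hjb0
      rw [h, one_mul] at this
      exact absurd this (ne_of_gt hjb)
    have hjbT : jb ∈ T := ⟨hjb0, hajb⟩
    have hjbm : jb = m := le_antisymm (hmax' jb hjbT) hmjb
    have hbm : 1 < b m := hjbm ▸ hjb
    have : (1 : G) < 1 := by
      calc (1 : G) < a m := ham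
        _ ≤ a m * b m := le_mul_of_one_le_right' hbm.le
        _ = 1 := habm
    exact lt_irrefl _ this
  intro i hi
  have h1 := key i hi
  have h2 := hab i hi
  rw [h1, one_mul] at h2
  exact ⟨h1, h2⟩

/-- In the right wreath product `ℤ →wr G` over a po-group `G`,
if positive elements `(0,⟨x¹⟩), (0,⟨x²⟩), (0,⟨y¹⟩), (0,⟨y²⟩)` supported at the
single index `0` satisfy `x¹·x² = y¹·y²` and positive elements
`(0,⟨c^{jk}⟩)` form an RDP decomposition of them, then `c^{jk}_i = 1` for
every index `i > 0`. -/
theorem zwr_decomposition_vanishes_above_zero {G : Type*} [Group G]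
    [PartialOrder G]
    [CovariantClass G G (· * ·) (· ≤ ·)]
    [CovariantClass G G (Function.swap (· * ·)) (· ≤ ·)]
    (x₁ x₂ y₁ y₂ c₁₁ c₁₂ c₂₁ c₂₂ : ℤ → G)
    (hx₁ : ∀ i : ℤ, i ≠ 0 → x₁ i = 1) (hx₂ : ∀ i : ℤ, i ≠ 0 → x₂ i = 1)
    (hy₁ : ∀ i : ℤ, i ≠ 0 → y₁ i = 1) (hy₂ : ∀ i : ℤ, i ≠ 0 → y₂ i = 1)
    (hx₁pos : rLE (zwrOne G) ((0 : ℤ), x₁)) (hx₂pos : rLE (zwrOne G) ((0 : ℤ), x₂))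
    (hy₁pos : rLE (zwrOne G) ((0 : ℤ), y₁)) (hy₂pos : rLE (zwrOne G) ((0 : ℤ), y₂))
    (heq : zwrMul ((0 : ℤ), x₁) ((0 : ℤ), x₂) = zwrMul ((0 : ℤ), y₁) ((0 : ℤ), y₂))
    (hc₁₁fin : (Function.mulSupport c₁₁).Finite)
    (hc₁₂fin : (Function.mulSupport c₁₂).Finite)
    (hc₂₁fin : (Function.mulSupport c₂₁).Finite)
    (hc₂₂fin : (Function.mulSupport c₂₂).Finite)
    (hc₁₁pos : rLE (zwrOne G) ((0 : ℤ), c₁₁)) (hc₁₂pos : rLE (zwrOne G) ((0 : ℤ), c₁₂))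
    (hc₂₁pos : rLE (zwrOne G) ((0 : ℤ), c₂₁)) (hc₂₂pos : rLE (zwrOne G) ((0 : ℤ), c₂₂))
    (h₁ : ((0 : ℤ), x₁) = zwrMul ((0 : ℤ), c₁₁) ((0 : ℤ), c₁₂))
    (h₂ : ((0 : ℤ), x₂) = zwrMul ((0 : ℤ), c₂₁) ((0 : ℤ), c₂₂))
    (h₃ : ((0 : ℤ), y₁) = zwrMul ((0 : ℤ), c₁₁) ((0 : ℤ), c₂₁))
    (h₄ : ((0 : ℤ), y₂) = zwrMul ((0 : ℤ), c₁₂) ((0 : ℤ), c₂₂)) :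
    ∀ i : ℤ, 0 < i → c₁₁ i = 1 ∧ c₁₂ i = 1 ∧ c₂₁ i = 1 ∧ c₂₂ i = 1 := by
  have e₁ : ∀ i : ℤ, 0 < i → c₁₁ i * c₁₂ i = 1 := by
    intro i hi
    have := congrFun (congrArg Prod.snd h₁) i
    simp only [zwrMul, add_zero] at this
    rw [← this, hx₁ i hi.ne']
  have e₂ : ∀ i : ℤ, 0 < i → c₂₁ i * c₂₂ i = 1 := by
    intro i hi
    have := congrFun (congrArg Prod.snd h₂) i
    simp only [zwrMul, add_zero] at this
    rw [← this, hx₂ i hi.ne']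
  have k₁ := key_vanish c₁₁ c₁₂ hc₁₁fin e₁
    (rle_pos_cases c₁₁ hc₁₁pos) (rle_pos_cases c₁₂ hc₁₂pos)
  have k₂ := key_vanish c₂₁ c₂₂ hc₂₁fin e₂
    (rle_pos_cases c₂₁ hc₂₁pos) (rle_pos_cases c₂₂ hc₂₂pos)
  intro i hi
  exact ⟨(k₁ i hi).1, (k₁ i hi).2, (k₂ i hi).1, (k₂ i hi).2⟩
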